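/- Let k be a field, let n be a positive integer, and let N = an + r be a positive integer with integers a ≥ 0 and 0 ≤ r ≤ n−1. Let R = k[x,y]/(x^n+y^n), let D be the 2×2 matrix over R with rows [x^{n−r}, (−1)^{a−1} y^r] and [(−1)^a y^{n−r}, x^r], and let Ď be the 2×2 matrix over R with rows [x^r, (−1)^a y^r] and [(−1)^{a+1} y^{n−r}, x^{n−r}]. Then the infinite sequence ⋯ → R² --Ď--> R² --D--> R² --[x^N, y^N]--> R → R/(x^N,y^N) → 0 is an exact complex of R-modules; explicitly: the kernel of the map R² → R, (u,v) ↦ u·x^N + v·y^N, equals the image of the map R² → R² given by D; the kernel of the map given by D equals the image of the map given by Ď; and the kernel of the map given by Ď equals the image of the map given by D. -/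

import Mathlib

open MvPolynomial

universe u

set_option synthInstance.maxHeartbeats 400000
set_option maxHeartbeats 1000000

noncomputable section

/-- The two-variable diagonal hypersurface ring `R̄ = k[x,y]/(xⁿ+yⁿ)`. -/
abbrev DiagRing2 (k : Type u) [Field k] (n : ℕ) : Type u :=
  MvPolynomial (Fin 2) k ⧸
    Ideal.span {(X 0 : MvPolynomial (Fin 2) k) ^ n + X 1 ^ n}

/-- The images of the variables `x`, `y` in `R̄`. -/
def xv2 (k : Type u) [Field k] (n : ℕ) (i : Fin 2) : DiagRing2 k n :=
  Ideal.Quotient.mk _ (X i)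

/-- The matrix `D` with rows `[x^{n−r}, (−1)^{a−1} y^r]`, `[(−1)^a y^{n−r}, x^r]`
(note `(−1)^{a−1} = (−1)^{a+1}`). -/
def Dmat (k : Type u) [Field k] (n a r : ℕ) : Matrix (Fin 2) (Fin 2) (DiagRing2 k n) :=
  !![xv2 k n 0 ^ (n - r),                  (-1 : DiagRing2 k n) ^ (a + 1) * xv2 k n 1 ^ r;
     (-1 : DiagRing2 k n) ^ a * xv2 k n 1 ^ (n - r), xv2 k n 0 ^ r]

/-- The matrix `Ď` with rows `[x^r, (−1)^a y^r]`, `[(−1)^{a+1} y^{n−r}, x^{n−r}]`. -/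
def Dcheck (k : Type u) [Field k] (n a r : ℕ) : Matrix (Fin 2) (Fin 2) (DiagRing2 k n) :=
  !![xv2 k n 0 ^ r,                      (-1 : DiagRing2 k n) ^ a * xv2 k n 1 ^ r;
     (-1 : DiagRing2 k n) ^ (a + 1) * xv2 k n 1 ^ (n - r), xv2 k n 0 ^ (n - r)]

/-- The `R̄`-linear map `R̄² → R̄`, `(u,v) ↦ u·x^N + v·y^N`. -/
def rowMap2 (k : Type u) [Field k] (n N : ℕ) :
    (Fin 2 → DiagRing2 k n) →ₗ[DiagRing2 k n] DiagRing2 k n :=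
  ∑ i : Fin 2,
    (LinearMap.toSpanSingleton (DiagRing2 k n) (DiagRing2 k n) (xv2 k n i ^ N)).comp
      (LinearMap.proj i)

/- ==================== auxiliary lemmas ==================== -/

section Aux

variable {k : Type u} [Field k]

private lemma primeX (i : Fin 2) : Prime (X i : MvPolynomial (Fin 2) k) := by
  have h0 : Prime (X 0 : MvPolynomial (Fin 2) k) := by
    rw [← MulEquiv.prime_iff (finSuccEquiv k 1).toMulEquiv]
    simpa [finSuccEquiv_X_zero] using
      (Polynomial.prime_X : Prime (Polynomial.X : Polynomial (MvPolynomial (Fin 1) k)))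
  rw [← MulEquiv.prime_iff (renameEquiv k (Equiv.swap (0 : Fin 2) i)).toMulEquiv] at h0
  simpa using h0

private lemma fne {n : ℕ} (hn : 0 < n) :
    (X 0 ^ n + X 1 ^ n : MvPolynomial (Fin 2) k) ≠ 0 := by
  intro h
  have := congrArg (eval (fun i : Fin 2 => if i = 0 then (1 : k) else 0)) h
  simp [zero_pow hn.ne'] at this

private lemma fnotdvd {n : ℕ} (hn : 0 < n) :
    ¬ (X 1 : MvPolynomial (Fin 2) k) ∣ (X 0 ^ n + X 1 ^ n) := by
  rintro ⟨q, hq⟩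
  have := congrArg (eval (fun i : Fin 2 => if i = 0 then (1 : k) else 0)) hq
  simp [zero_pow hn.ne'] at this

private lemma fdvd_cancel_y {n : ℕ} (hn : 0 < n) (m : ℕ) :
    ∀ t : MvPolynomial (Fin 2) k,
      (X 0 ^ n + X 1 ^ n) ∣ X 1 ^ m * t → (X 0 ^ n + X 1 ^ n) ∣ t := by
  induction m with
  | zero => intro t h; simpa using h
  | succ m ih =>
    intro t h
    have h' : (X 0 ^ n + X 1 ^ n : MvPolynomial (Fin 2) k) ∣ X 1 ^ m * (X 1 * t) := by
      have he : (X 1 : MvPolynomial (Fin 2) k) ^ (m + 1) * t = X 1 ^ m * (X 1 * t) := by ring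
      rwa [he] at h
    obtain ⟨g, hg⟩ := ih _ h'
    have hy : (X 1 : MvPolynomial (Fin 2) k) ∣ (X 0 ^ n + X 1 ^ n) * g := ⟨t, hg.symm⟩
    rcases (primeX 1).2.2 _ _ hy with h1 | h1
    · exact absurd h1 (fnotdvd hn)
    · obtain ⟨g', rfl⟩ := h1
      refine ⟨g', mul_left_cancel₀ (X_ne_zero 1) ?_⟩
      linear_combination hg

private lemma syzygy_xr_yr {m r : ℕ} (p q c : MvPolynomial (Fin 2) k)
    (h : p * X 0 ^ r + q * X 1 ^ r = (X 0 ^ (m + r) + X 1 ^ (m + r)) * c) :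
    ∃ t, p = X 0 ^ m * c + X 1 ^ r * t ∧ q = X 1 ^ m * c - X 0 ^ r * t := by
  have key : (p - X 0 ^ m * c) * X 0 ^ r = (X 1 ^ m * c - q) * X 1 ^ r := by
    linear_combination h
  have hnd : ¬ (X 1 : MvPolynomial (Fin 2) k) ∣ X 0 ^ r := by
    intro hd
    cases r with
    | zero => exact (primeX (k := k) 1).not_dvd_one (by simpa using hd)
    | succ r' =>
      have h2 : (X 1 : MvPolynomial (Fin 2) k) ∣ X 0 := (primeX 1).dvd_of_dvd_pow hd
      obtain ⟨q', hq'⟩ := h2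
      have := congrArg (eval (fun i : Fin 2 => if i = 0 then (1 : k) else 0)) hq'
      simp at this
  have hdvd : (X 1 : MvPolynomial (Fin 2) k) ^ r ∣ (p - X 0 ^ m * c) :=
    (primeX 1).pow_dvd_of_dvd_mul_right r hnd ⟨X 1 ^ m * c - q, by linear_combination key⟩
  obtain ⟨t, ht⟩ := hdvd
  refine ⟨t, by linear_combination ht, ?_⟩
  have h0 : (X 1 : MvPolynomial (Fin 2) k) ^ r * (q - (X 1 ^ m * c - X 0 ^ r * t)) = 0 := by
    linear_combination key - X 0 ^ r * ht
  rcases mul_eq_zero.mp h0 with h1 | h1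
  · exact absurd h1 (pow_ne_zero r (X_ne_zero 1))
  · linear_combination h1

private lemma div1 (a m r : ℕ) :
    ((X 0) ^ (m + r) + (X 1) ^ (m + r) : MvPolynomial (Fin 2) k) ∣
      (X 0 ^ (a * (m + r) + r + m) + (-1) ^ a * X 1 ^ (a * (m + r) + r + m)) := by
  obtain ⟨c, hc⟩ := sub_dvd_pow_sub_pow (X 0 ^ (m + r) : MvPolynomial (Fin 2) k)
    (-(X 1 ^ (m + r))) (a + 1)
  refine ⟨c, ?_⟩
  rcases Nat.even_or_odd a with ha | ha
  · rw [(ha.add_one).neg_pow] at hc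
    rw [ha.neg_one_pow]
    linear_combination hc
  · rw [(ha.add_one).neg_pow] at hc
    rw [ha.neg_one_pow]
    linear_combination hc

private lemma div2 (a m r : ℕ) :
    ((X 0) ^ (m + r) + (X 1) ^ (m + r) : MvPolynomial (Fin 2) k) ∣
      ((-1) ^ (a + 1) * X 1 ^ r * X 0 ^ (a * (m + r) + r)
        + X 0 ^ r * X 1 ^ (a * (m + r) + r)) := by
  obtain ⟨c, hc⟩ := sub_dvd_pow_sub_pow (X 0 ^ (m + r) : MvPolynomial (Fin 2) k)
    (-(X 1 ^ (m + r))) a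
  rcases Nat.even_or_odd a with ha | ha
  · refine ⟨-(X 0 ^ r * X 1 ^ r * c), ?_⟩
    rw [ha.neg_pow] at hc
    rw [(ha.add_one).neg_one_pow]
    linear_combination (-(X 0 ^ r * X 1 ^ r)) * hc
  · refine ⟨X 0 ^ r * X 1 ^ r * c, ?_⟩
    rw [ha.neg_pow] at hc
    rw [(ha.add_one).neg_one_pow]
    linear_combination (X 0 ^ r * X 1 ^ r) * hc

private lemma div3 (a n : ℕ) :
    ((X 0) ^ n + (X 1) ^ n : MvPolynomial (Fin 2) k) ∣
      (X 0 ^ (a * n) - (-1) ^ a * X 1 ^ (a * n)) := by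
  obtain ⟨c, hc⟩ := sub_dvd_pow_sub_pow (X 0 ^ n : MvPolynomial (Fin 2) k) (-(X 1 ^ n)) a
  refine ⟨c, ?_⟩
  rcases Nat.even_or_odd a with ha | ha
  · rw [ha.neg_pow] at hc
    rw [ha.neg_one_pow]
    linear_combination hc
  · rw [ha.neg_pow] at hc
    rw [ha.neg_one_pow]
    linear_combination hc

private lemma MFhelper {n : ℕ} (hn : 0 < n)
    (A B : Matrix (Fin 2) (Fin 2) (MvPolynomial (Fin 2) k))
    (hBA : B * A = ((X 0 : MvPolynomial (Fin 2) k) ^ n + X 1 ^ n)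
        • (1 : Matrix (Fin 2) (Fin 2) (MvPolynomial (Fin 2) k)))
    (hAB : A * B = ((X 0 : MvPolynomial (Fin 2) k) ^ n + X 1 ^ n)
        • (1 : Matrix (Fin 2) (Fin 2) (MvPolynomial (Fin 2) k))) :
    LinearMap.ker ((A.map (Ideal.Quotient.mk
        (Ideal.span {(X 0 : MvPolynomial (Fin 2) k) ^ n + X 1 ^ n}))).mulVecLin)
      = LinearMap.range ((B.map (Ideal.Quotient.mk
        (Ideal.span {(X 0 : MvPolynomial (Fin 2) k) ^ n + X 1 ^ n}))).mulVecLin) := by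
  set f : MvPolynomial (Fin 2) k := X 0 ^ n + X 1 ^ n with hf
  set π : MvPolynomial (Fin 2) k →+* DiagRing2 k n := Ideal.Quotient.mk (Ideal.span {f}) with hπ
  have hπf : π f = 0 := Ideal.Quotient.eq_zero_iff_mem.mpr (Ideal.mem_span_singleton_self f)
  apply le_antisymm
  · rintro v hv
    rw [LinearMap.mem_ker] at hv
    obtain ⟨u0, hu0⟩ := Ideal.Quotient.mk_surjective (v 0)
    obtain ⟨u1, hu1⟩ := Ideal.Quotient.mk_surjective (v 1)
    have hcomp : ∀ i : Fin 2, f ∣ (A.mulVec ![u0, u1]) i := by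
      intro i
      rw [← Ideal.Quotient.eq_zero_iff_dvd]
      have hz : ((A.map π).mulVecLin v) i = 0 := by rw [hv]; rfl
      simpa [Matrix.mulVecLin_apply, Matrix.mulVec, dotProduct, Fin.sum_univ_two,
        Matrix.map_apply, map_add, map_mul, hu0, hu1] using hz
    obtain ⟨c0, hc0⟩ := hcomp 0
    obtain ⟨c1, hc1⟩ := hcomp 1
    refine ⟨![π c0, π c1], ?_⟩
    have hkey : B.mulVec (A.mulVec ![u0, u1]) = f • ![u0, u1] := by
      rw [Matrix.mulVec_mulVec, hBA, Matrix.smul_mulVec, Matrix.one_mulVec]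
    have hexp : ∀ j : Fin 2, B j 0 * (A.mulVec ![u0, u1] 0) + B j 1 * (A.mulVec ![u0, u1] 1)
        = f * (![u0, u1] j) := by
      intro j
      simpa [Matrix.mulVec, dotProduct, Fin.sum_univ_two] using congrFun hkey j
    have hS : ∀ j : Fin 2, B j 0 * c0 + B j 1 * c1 = ![u0, u1] j := by
      intro j
      have h := hexp j
      rw [hc0, hc1] at h
      exact mul_left_cancel₀ (fne hn) (by linear_combination h)
    have hS0 := congrArg π (hS 0)
    have hS1 := congrArg π (hS 1)
    simp only [map_add, map_mul, Matrix.cons_val_zero, Matrix.cons_val_one, Matrix.head_cons]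
      at hS0 hS1
    rw [hu0] at hS0; rw [hu1] at hS1
    funext j
    fin_cases j
    · simpa [Matrix.mulVecLin_apply, Matrix.mulVec, dotProduct, Fin.sum_univ_two,
        Matrix.map_apply] using hS0
    · simpa [Matrix.mulVecLin_apply, Matrix.mulVec, dotProduct, Fin.sum_univ_two,
        Matrix.map_apply] using hS1
  · rintro v ⟨w, rfl⟩
    rw [LinearMap.mem_ker, ← LinearMap.comp_apply, ← Matrix.mulVecLin_mul, ← Matrix.map_mul,
      hAB]
    have hz : ((f • (1 : Matrix (Fin 2) (Fin 2) (MvPolynomial (Fin 2) k))).map π) = 0 := by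
      ext i j
      simp only [Matrix.map_apply, Matrix.smul_apply, Matrix.one_apply, smul_eq_mul]
      split <;> simp [hπf]
    rw [hz]
    simp

end Aux

/-- `S`-lift of the matrix `D`. -/
private def DmatS (k : Type u) [Field k] (a m r : ℕ) :
    Matrix (Fin 2) (Fin 2) (MvPolynomial (Fin 2) k) :=
  !![X 0 ^ m, (-1) ^ (a + 1) * X 1 ^ r;
     (-1) ^ a * X 1 ^ m, X 0 ^ r]

/-- `S`-lift of the matrix `Ď`. -/
private def DcheckS (k : Type u) [Field k] (a m r : ℕ) :
    Matrix (Fin 2) (Fin 2) (MvPolynomial (Fin 2) k) :=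
  !![X 0 ^ r, (-1) ^ a * X 1 ^ r;
     (-1) ^ (a + 1) * X 1 ^ m, X 0 ^ m]

section Aux2

variable {k : Type u} [Field k]

private lemma rowMap2_apply (n N : ℕ) (v : Fin 2 → DiagRing2 k n) :
    rowMap2 k n N v = v 0 * xv2 k n 0 ^ N + v 1 * xv2 k n 1 ^ N := by
  simp [rowMap2, Fin.sum_univ_two, LinearMap.toSpanSingleton_apply, smul_eq_mul]

private lemma Dmat_eq (a m r : ℕ) :
    Dmat k (m + r) a r = (DmatS k a m r).map (Ideal.Quotient.mk
      (Ideal.span {(X 0 : MvPolynomial (Fin 2) k) ^ (m + r) + X 1 ^ (m + r)})) := by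
  ext i j
  fin_cases i <;> fin_cases j <;>
    simp [Dmat, DmatS, xv2, Matrix.map_apply, map_mul, map_pow, map_neg, map_one,
      Nat.add_sub_cancel]

private lemma Dcheck_eq (a m r : ℕ) :
    Dcheck k (m + r) a r = (DcheckS k a m r).map (Ideal.Quotient.mk
      (Ideal.span {(X 0 : MvPolynomial (Fin 2) k) ^ (m + r) + X 1 ^ (m + r)})) := by
  ext i j
  fin_cases i <;> fin_cases j <;>
    simp [Dcheck, DcheckS, xv2, Matrix.map_apply, map_mul, map_pow, map_neg, map_one,
      Nat.add_sub_cancel]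

private lemma prodDC (a m r : ℕ) :
    DmatS k a m r * DcheckS k a m r
      = ((X 0 : MvPolynomial (Fin 2) k) ^ (m + r) + X 1 ^ (m + r))
        • (1 : Matrix (Fin 2) (Fin 2) (MvPolynomial (Fin 2) k)) := by
  ext i j
  fin_cases i <;> fin_cases j <;> rcases Nat.even_or_odd a with ha | ha <;>
    simp [DmatS, DcheckS, Matrix.mul_apply, Fin.sum_univ_two, Matrix.smul_apply,
      Matrix.one_apply, ha.neg_one_pow, ha.add_one.neg_one_pow] <;>
    ring

private lemma prodCD (a m r : ℕ) :
    DcheckS k a m r * DmatS k a m r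
      = ((X 0 : MvPolynomial (Fin 2) k) ^ (m + r) + X 1 ^ (m + r))
        • (1 : Matrix (Fin 2) (Fin 2) (MvPolynomial (Fin 2) k)) := by
  ext i j
  fin_cases i <;> fin_cases j <;> rcases Nat.even_or_odd a with ha | ha <;>
    simp [DmatS, DcheckS, Matrix.mul_apply, Fin.sum_univ_two, Matrix.smul_apply,
      Matrix.one_apply, ha.neg_one_pow, ha.add_one.neg_one_pow] <;>
    ring

end Aux2

/-- Corollary (C2.4): the sequence
`⋯ → R̄² --Ď--> R̄² --D--> R̄² --[x^N,y^N]--> R̄ → R̄/(x^N,y^N) → 0` is exact: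
the image of the row map is the ideal `(x^N,y^N)` (the kernel of the projection onto
`R̄/(x^N,y^N)`), the kernel of the row map is the image of `D`, the kernel of `D` is the
image of `Ď`, and the kernel of `Ď` is the image of `D`. -/
theorem two_variable_resolution_exact
    (k : Type u) [Field k] (n N a r : ℕ) (hn : 0 < n) (hN : 0 < N)
    (hr : r ≤ n - 1) (hNr : N = a * n + r) :
    LinearMap.range (rowMap2 k n N) =
        (Ideal.span {xv2 k n 0 ^ N, xv2 k n 1 ^ N} : Ideal (DiagRing2 k n)) ∧
    LinearMap.ker (rowMap2 k n N) = LinearMap.range (Matrix.mulVecLin (Dmat k n a r)) ∧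
    LinearMap.ker (Matrix.mulVecLin (Dmat k n a r)) =
        LinearMap.range (Matrix.mulVecLin (Dcheck k n a r)) ∧
    LinearMap.ker (Matrix.mulVecLin (Dcheck k n a r)) =
        LinearMap.range (Matrix.mulVecLin (Dmat k n a r)) := by
  classical
  subst hNr
  obtain ⟨m, hmn⟩ : ∃ m, n = m + r := ⟨n - r, by omega⟩
  subst hmn
  rw [Dmat_eq, Dcheck_eq]
  refine ⟨?_, ?_, ?_, ?_⟩
  · -- Part 1 : range of the row map is the ideal (x^N, y^N)
    ext z
    simp only [LinearMap.mem_range, Ideal.mem_span_pair]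
    constructor
    · rintro ⟨v, rfl⟩
      exact ⟨v 0, v 1, (rowMap2_apply _ _ v).symm⟩
    · rintro ⟨p, q, hpq⟩
      refine ⟨![p, q], ?_⟩
      rw [rowMap2_apply]
      simpa using hpq
  · -- Part 2 : ker of the row map = range of D
    apply le_antisymm
    · -- ker ⊆ range
      intro v hv
      rw [LinearMap.mem_ker, rowMap2_apply] at hv
      obtain ⟨u0, hu0⟩ := Ideal.Quotient.mk_surjective (v 0)
      obtain ⟨u1, hu1⟩ := Ideal.Quotient.mk_surjective (v 1)
      have hdvd : ((X 0 : MvPolynomial (Fin 2) k) ^ (m + r) + X 1 ^ (m + r)) ∣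
          (u0 * X 0 ^ (a * (m + r) + r) + u1 * X 1 ^ (a * (m + r) + r)) := by
        rw [← Ideal.Quotient.eq_zero_iff_dvd]
        simp only [map_add, map_mul, map_pow]
        rw [hu0, hu1]
        simpa [xv2] using hv
      obtain ⟨d, hd⟩ := hdvd
      obtain ⟨c3, hc3⟩ := div3 (k := k) a (m + r)
      have hW : ((X 0 : MvPolynomial (Fin 2) k) ^ (m + r) + X 1 ^ (m + r)) ∣
          X 1 ^ (a * (m + r)) * ((-1) ^ a * u0 * X 0 ^ r + u1 * X 1 ^ r) :=
        ⟨d - u0 * X 0 ^ r * c3, by linear_combination hd - (u0 * X 0 ^ r) * hc3⟩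
      obtain ⟨e, he⟩ := fdvd_cancel_y hn _ _ hW
      obtain ⟨t, hB1, hB2⟩ := syzygy_xr_yr (m := m) (r := r) ((-1) ^ a * u0) u1 e
        (by linear_combination he)
      refine ⟨![Ideal.Quotient.mk _ ((-1) ^ a * e), Ideal.Quotient.mk _ (-t)], ?_⟩
      funext j
      fin_cases j
      · have hS : (X 0 : MvPolynomial (Fin 2) k) ^ m * ((-1) ^ a * e)
            + (-1) ^ (a + 1) * X 1 ^ r * (-t) = u0 := by
          rcases Nat.even_or_odd a with ha | ha <;>
            simp only [ha.neg_one_pow, ha.add_one.neg_one_pow] at hB1 ⊢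
          · linear_combination -hB1
          · linear_combination hB1
        have hQ := congrArg (Ideal.Quotient.mk
          (Ideal.span {(X 0 : MvPolynomial (Fin 2) k) ^ (m + r) + X 1 ^ (m + r)})) hS
        simp only [map_add, map_mul, map_pow, map_neg, map_one] at hQ
        rw [hu0] at hQ
        simp [DmatS, Matrix.mulVecLin_apply, Matrix.mulVec, dotProduct,
          Fin.sum_univ_two, Matrix.map_apply, map_mul, map_pow, map_neg, map_one]
        linear_combination hQ
      · have hS : ((-1 : MvPolynomial (Fin 2) k)) ^ a * X 1 ^ m * ((-1) ^ a * e)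
            + X 0 ^ r * (-t) = u1 := by
          rcases Nat.even_or_odd a with ha | ha <;>
            simp only [ha.neg_one_pow, ha.add_one.neg_one_pow] <;>
          linear_combination -hB2
        have hQ := congrArg (Ideal.Quotient.mk
          (Ideal.span {(X 0 : MvPolynomial (Fin 2) k) ^ (m + r) + X 1 ^ (m + r)})) hS
        simp only [map_add, map_mul, map_pow, map_neg, map_one] at hQ
        rw [hu1] at hQ
        simp [DmatS, Matrix.mulVecLin_apply, Matrix.mulVec, dotProduct,
          Fin.sum_univ_two, Matrix.map_apply, map_mul, map_pow, map_neg, map_one]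
        linear_combination hQ
    · -- range ⊆ ker
      rintro v ⟨w, rfl⟩
      rw [LinearMap.mem_ker, rowMap2_apply]
      have h1 : (Ideal.Quotient.mk
          (Ideal.span {(X 0 : MvPolynomial (Fin 2) k) ^ (m + r) + X 1 ^ (m + r)}))
          (X 0 ^ (a * (m + r) + r + m) + (-1) ^ a * X 1 ^ (a * (m + r) + r + m)) = 0 :=
        (Ideal.Quotient.eq_zero_iff_dvd _ _).mpr (div1 a m r)
      have h2 : (Ideal.Quotient.mk
          (Ideal.span {(X 0 : MvPolynomial (Fin 2) k) ^ (m + r) + X 1 ^ (m + r)}))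
          ((-1) ^ (a + 1) * X 1 ^ r * X 0 ^ (a * (m + r) + r)
            + X 0 ^ r * X 1 ^ (a * (m + r) + r)) = 0 :=
        (Ideal.Quotient.eq_zero_iff_dvd _ _).mpr (div2 a m r)
      simp only [map_add, map_mul, map_pow, map_neg, map_one] at h1 h2
      rcases Nat.even_or_odd a with ha | ha <;>
        simp [DmatS, xv2, Matrix.mulVecLin_apply, Matrix.mulVec, dotProduct,
          Fin.sum_univ_two, Matrix.map_apply, map_mul, map_pow, map_neg, map_one,
          ha.neg_one_pow, ha.add_one.neg_one_pow] at h1 h2 ⊢ <;>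
        linear_combination (w 0) * h1 + (w 1) * h2
          + ((Ideal.Quotient.mk (Ideal.span {(X 0 : MvPolynomial (Fin 2) k) ^ (m + r)
              + X 1 ^ (m + r)})) (X 0) ^ (a * (m + r) + r)
            * (Ideal.Quotient.mk (Ideal.span {(X 0 : MvPolynomial (Fin 2) k) ^ (m + r)
              + X 1 ^ (m + r)})) (X 1) ^ r * w 1
            - (Ideal.Quotient.mk (Ideal.span {(X 0 : MvPolynomial (Fin 2) k) ^ (m + r)
              + X 1 ^ (m + r)})) (X 1) ^ (a * (m + r) + r + m) * w 0)
            * ha.neg_one_pow (α := DiagRing2 k (m + r))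
  · -- Part 3 : ker D = range Ď
    exact MFhelper hn (DmatS k a m r) (DcheckS k a m r) (prodCD a m r) (prodDC a m r)
  · -- Part 4 : ker Ď = range D
    exact MFhelper hn (DcheckS k a m r) (DmatS k a m r) (prodDC a m r) (prodCD a m r)

end
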